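/- Let (X,d) be a metric space, μ a Borel measure on X, and o ∈ X. Assume that μ(B(o,r)) < ∞ for every r > 0 and that the function r ↦ μ(B(o,r)) is locally Lipschitz continuous on (0,∞). Let φ : (0,∞) → [0,∞) be continuous and monotone (non-increasing or non-decreasing), and let f : X → [0,∞) be μ-measurable and bounded on bounded subsets of X. Then for every r > 0, the boundary integral of the function z ↦ φ(d(o,z)) f(z) on ∂B(o,r) equals φ(r) · |f|_{∂B(o,r)}, i.e., |(φ∘d_o)·f|_{∂B(o,r)} = φ(r)|f|_{∂B(o,r)}, where d_o denotes the distance function z ↦ d(o,z). -/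

import Mathlib

open MeasureTheory Metric Filter Set

/-- The boundary integral of `f` on `∂B(o,r)`:
`|f|_{∂B(o,r)} = limsup_{δ→0⁺} (1/δ) ∫_{B(o,r+δ)∖B(o,r)} f dμ`. -/
noncomputable def bdryIntegral {X : Type*} [MetricSpace X] [MeasurableSpace X]
    (μ : Measure X) (f : X → ℝ) (o : X) (r : ℝ) : ℝ :=
  limsup (fun δ : ℝ => (∫ z in ball o (r + δ) \ ball o r, f z ∂μ) / δ)
    (nhdsWithin 0 (Ioi 0))

private lemma limsup_mul_const_aux {l : Filter ℝ} [l.NeBot] {g : ℝ → ℝ} {c : ℝ} (hc : 0 ≤ c)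
    (hub : IsBoundedUnder (· ≤ ·) l g) (hcb : IsCoboundedUnder (· ≤ ·) l g) :
    limsup (fun x => c * g x) l = c * limsup g l :=
  (Monotone.map_limsup_of_continuousAt (f := fun x : ℝ => c * x)
    (fun _ _ hab => mul_le_mul_of_nonneg_left hab hc) g
    (continuous_const.mul continuous_id).continuousAt hub hcb).symm

private lemma limsup_eq_of_tendsto_sub_aux {l : Filter ℝ} [l.NeBot] {u v : ℝ → ℝ}
    (h : Tendsto (fun x => u x - v x) l (nhds 0))
    (hub : IsBoundedUnder (· ≤ ·) l v) (hlb : IsBoundedUnder (· ≥ ·) l v) :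
    limsup u l = limsup v l := by
  have hclose : ∀ ε : ℝ, 0 < ε → ∀ᶠ x in l, |u x - v x| < ε := by
    intro ε hε
    have := NormedAddCommGroup.tendsto_nhds_zero.mp h ε hε
    simpa using this
  obtain ⟨M, hM⟩ := hub
  obtain ⟨m, hm⟩ := hlb
  have hM' : ∀ᶠ x in l, v x ≤ M := eventually_map.mp hM
  have hm' : ∀ᶠ x in l, m ≤ v x := eventually_map.mp hm
  have huub : IsBoundedUnder (· ≤ ·) l u := by
    refine ⟨M + 1, eventually_map.mpr ?_⟩
    filter_upwards [hM', hclose 1 one_pos] with x h1 h2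
    nlinarith [abs_lt.mp h2]
  have hulb : IsBoundedUnder (· ≥ ·) l u := by
    refine ⟨m - 1, eventually_map.mpr ?_⟩
    filter_upwards [hm', hclose 1 one_pos] with x h1 h2
    have := (abs_lt.mp h2).1
    simp only [ge_iff_le]
    linarith
  have key : ∀ (a b : ℝ → ℝ), IsBoundedUnder (· ≤ ·) l a → IsBoundedUnder (· ≥ ·) l a →
      IsBoundedUnder (· ≤ ·) l b → IsBoundedUnder (· ≥ ·) l b →
      (∀ ε : ℝ, 0 < ε → ∀ᶠ x in l, |a x - b x| < ε) → limsup a l ≤ limsup b l := by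
    intro a b ha hla hb hlb_b hab
    refine le_of_forall_pos_le_add ?_
    intro ε hε
    have h1 : ∀ᶠ x in l, a x ≤ b x + ε := by
      filter_upwards [hab ε hε] with x hx
      have := (abs_lt.mp hx).2
      linarith
    calc limsup a l ≤ limsup (fun x => b x + ε) l :=
          limsup_le_limsup h1 hla.isCoboundedUnder_le
            (by
              obtain ⟨B, hB⟩ := hb
              refine ⟨B + ε, eventually_map.mpr ?_⟩
              filter_upwards [eventually_map.mp hB] with x hx
              exact (by linarith : b x + ε ≤ B + ε))
      _ = limsup b l + ε := limsup_add_const l b ε hb hlb_b.isCoboundedUnder_le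
  refine le_antisymm (key u v huub hulb ⟨M, hM⟩ ⟨m, hm⟩ hclose)
    (key v u ⟨M, hM⟩ ⟨m, hm⟩ huub hulb ?_)
  intro ε hε
  filter_upwards [hclose ε hε] with x hx
  rwa [abs_sub_comm]

theorem stmt_5 {X : Type*} [MetricSpace X] [MeasurableSpace X] [BorelSpace X]
    (μ : Measure X) (o : X)
    (hfin : ∀ r : ℝ, 0 < r → μ (ball o r) < ⊤)
    (hLip : ∀ a : ℝ, 0 < a → ∃ (K : NNReal) (t : Set ℝ), t ∈ nhdsWithin a (Ioi 0) ∧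
      LipschitzOnWith K (fun r : ℝ => (μ (ball o r)).toReal) t)
    (φ : ℝ → ℝ) (hφc : ContinuousOn φ (Ioi 0)) (hφ0 : ∀ r : ℝ, 0 < r → 0 ≤ φ r)
    (hφmono : MonotoneOn φ (Ioi 0) ∨ AntitoneOn φ (Ioi 0))
    (f : X → ℝ) (hf : Measurable f) (hf0 : ∀ z, 0 ≤ f z)
    (hbd : ∀ s : Set X, Bornology.IsBounded s → ∃ C : ℝ, ∀ z ∈ s, |f z| ≤ C) :
    ∀ r : ℝ, 0 < r →
      bdryIntegral μ (fun z => φ (dist o z) * f z) o r = φ r * bdryIntegral μ f o r := by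
  intro r hr
  set l := nhdsWithin (0 : ℝ) (Ioi 0) with hl
  set A : ℝ → Set X := fun δ => ball o (r + δ) \ ball o r with hA
  set g : ℝ → ℝ := fun δ => (∫ z in A δ, f z ∂μ) / δ with hg
  set h : ℝ → ℝ := fun δ => (∫ z in A δ, φ (dist o z) * f z ∂μ) / δ with hh
  -- bound on f near the sphere
  obtain ⟨C, hC⟩ := hbd (ball o (r + 1)) isBounded_ball
  have hC0 : 0 ≤ C := (abs_nonneg (f o)).trans (hC o (mem_ball_self (by linarith)))
  -- Lipschitz data
  obtain ⟨K, t, ht, hK⟩ := hLip r hr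
  obtain ⟨ε₁, hε₁, hballt⟩ := Metric.mem_nhdsWithin_iff.mp ht
  have hrt : r ∈ t := mem_of_mem_nhdsWithin (mem_Ioi.mpr hr) ht
  -- bound on φ near the sphere
  obtain ⟨Cφ, hCφ⟩ := (isCompact_Icc (a := r) (b := r + 1)).exists_bound_of_continuousOn
    (hφc.mono fun x hx => lt_of_lt_of_le hr hx.1)
  -- basic facts for small δ
  have hAmeas : ∀ δ : ℝ, MeasurableSet (A δ) := fun δ =>
    measurableSet_ball.diff measurableSet_ball
  have hfacts : ∀ δ : ℝ, 0 < δ → δ < min ε₁ 1 →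
      μ (A δ) < ⊤ ∧ (μ (A δ)).toReal ≤ (K : ℝ) * δ ∧
      A δ ⊆ ball o (r + 1) ∧ (∀ z ∈ A δ, r ≤ dist o z ∧ dist o z < r + δ) := by
    intro δ hδ hδ'
    have hδε₁ : δ < ε₁ := lt_of_lt_of_le hδ' (min_le_left _ _)
    have hδ1 : δ < 1 := lt_of_lt_of_le hδ' (min_le_right _ _)
    have hsub : A δ ⊆ ball o (r + 1) :=
      diff_subset.trans (ball_subset_ball (by linarith))
    have hfin2 : μ (ball o (r + δ)) ≠ ⊤ := (hfin (r + δ) (by linarith)).ne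
    have hAfin : μ (A δ) < ⊤ :=
      lt_of_le_of_lt (measure_mono hsub) (hfin (r + 1) (by linarith))
    have hmeq : μ (A δ) = μ (ball o (r + δ)) - μ (ball o r) :=
      measure_diff (ball_subset_ball (by linarith))
        measurableSet_ball.nullMeasurableSet (hfin r hr).ne
    have hrδt : r + δ ∈ t := by
      refine hballt ⟨?_, by simp [mem_Ioi]; linarith⟩
      simp [Metric.mem_ball, Real.dist_eq, abs_of_pos hδ]
      linarith
    have hdist := hK.dist_le_mul (r + δ) hrδt r hrt
    rw [Real.dist_eq, Real.dist_eq] at hdist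
    have habs : |r + δ - r| = δ := by rw [add_sub_cancel_left, abs_of_pos hδ]
    rw [habs] at hdist
    have h1 : (μ (A δ)).toReal =
        (μ (ball o (r + δ))).toReal - (μ (ball o r)).toReal := by
      rw [hmeq, ENNReal.toReal_sub_of_le (measure_mono (ball_subset_ball (by linarith))) hfin2]
    refine ⟨hAfin, ?_, hsub, ?_⟩
    · rw [h1]
      calc (μ (ball o (r + δ))).toReal - (μ (ball o r)).toReal
          ≤ |(μ (ball o (r + δ))).toReal - (μ (ball o r)).toReal| := le_abs_self _
        _ ≤ (K : ℝ) * δ := hdist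
    · intro z hz
      obtain ⟨hz1, hz2⟩ := hz
      rw [mem_ball, dist_comm] at hz1
      rw [mem_ball, dist_comm] at hz2
      exact ⟨not_lt.mp hz2, hz1⟩
  have hmemIoo : Ioo (0 : ℝ) (min ε₁ 1) ∈ l :=
    Ioo_mem_nhdsGT_of_mem ⟨le_refl _, by positivity⟩
  -- integrability
  have hintf : ∀ δ : ℝ, 0 < δ → δ < min ε₁ 1 → IntegrableOn f (A δ) μ := by
    intro δ hδ hδ'
    obtain ⟨hAfin, _, hsub, _⟩ := hfacts δ hδ hδ'
    exact Measure.integrableOn_of_bounded hAfin.ne hf.aestronglyMeasurable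
      ((ae_restrict_iff' (hAmeas δ)).mpr (Eventually.of_forall fun z hz => hC z (hsub hz)))
  have hintφf : ∀ δ : ℝ, 0 < δ → δ < min ε₁ 1 →
      IntegrableOn (fun z => φ (dist o z) * f z) (A δ) μ := by
    intro δ hδ hδ'
    obtain ⟨hAfin, _, hsub, hdists⟩ := hfacts δ hδ hδ'
    have hcont : ContinuousOn (fun z => φ (dist o z)) (A δ) := by
      refine hφc.comp (continuous_const.dist continuous_id).continuousOn ?_
      intro z hz
      exact lt_of_lt_of_le hr (hdists z hz).1
    refine ⟨(hcont.aestronglyMeasurable (hAmeas δ)).mul hf.aestronglyMeasurable.restrict, ?_⟩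
    refine HasFiniteIntegral.restrict_of_bounded (C := |Cφ| * C) hAfin ?_
    refine (ae_restrict_iff' (hAmeas δ)).mpr (Eventually.of_forall fun z hz => ?_)
    have hdz : dist o z ∈ Icc r (r + 1) := by
      have := hdists z hz
      have hδ1 : δ < 1 := lt_of_lt_of_le hδ' (min_le_right _ _)
      exact ⟨this.1, by linarith [this.2]⟩
    have h1 : ‖φ (dist o z)‖ ≤ |Cφ| := (hCφ _ hdz).trans (le_abs_self Cφ)
    calc ‖φ (dist o z) * f z‖ = ‖φ (dist o z)‖ * ‖f z‖ := norm_mul _ _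
      _ ≤ |Cφ| * C := mul_le_mul h1 (hC z (hsub hz)) (norm_nonneg _) (abs_nonneg _)
  -- bounds on g
  have hg_lbE : ∀ᶠ δ in l, 0 ≤ g δ := by
    filter_upwards [hmemIoo] with δ hδ
    exact div_nonneg (setIntegral_nonneg (hAmeas δ) fun z _ => hf0 z) hδ.1.le
  have hg_ubE : ∀ᶠ δ in l, g δ ≤ C * (K : ℝ) := by
    filter_upwards [hmemIoo] with δ hδ
    obtain ⟨hAfin, hKδ, hsub, _⟩ := hfacts δ hδ.1 hδ.2
    have hnorm : ‖∫ z in A δ, f z ∂μ‖ ≤ C * (μ (A δ)).toReal :=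
      norm_setIntegral_le_of_norm_le_const hAfin
        (fun z hz => hC z (hsub hz))
    have h2 : (∫ z in A δ, f z ∂μ) ≤ C * ((K : ℝ) * δ) := by
      calc (∫ z in A δ, f z ∂μ) ≤ ‖∫ z in A δ, f z ∂μ‖ := le_abs_self _
        _ ≤ C * (μ (A δ)).toReal := hnorm
        _ ≤ C * ((K : ℝ) * δ) := mul_le_mul_of_nonneg_left hKδ hC0
    rw [hg, div_le_iff₀ hδ.1]
    calc (∫ z in A δ, f z ∂μ) ≤ C * ((K : ℝ) * δ) := h2
      _ = C * (K : ℝ) * δ := by ring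
  have hgub : IsBoundedUnder (· ≤ ·) l g := ⟨C * (K : ℝ), eventually_map.mpr hg_ubE⟩
  have hglb : IsBoundedUnder (· ≥ ·) l g := ⟨0, eventually_map.mpr hg_lbE⟩
  -- the difference tends to zero
  have hφr0 : 0 ≤ φ r := hφ0 r hr
  have hto : Tendsto (fun δ => h δ - φ r * g δ) l (nhds 0) := by
    rw [NormedAddCommGroup.tendsto_nhds_zero]
    intro ε hε
    set ε' : ℝ := ε / (C * (K : ℝ) + 1) with hε'def
    have hCK : 0 < C * (K : ℝ) + 1 := by positivity
    have hε' : 0 < ε' := div_pos hε hCK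
    have hφcont : ContinuousAt φ r := hφc.continuousAt (isOpen_Ioi.mem_nhds hr)
    obtain ⟨η, hη, hηφ⟩ := Metric.continuousAt_iff.mp hφcont ε' hε'
    have hmem2 : Ioo (0 : ℝ) (min (min ε₁ 1) η) ∈ l :=
      Ioo_mem_nhdsGT_of_mem ⟨le_refl _, by positivity⟩
    filter_upwards [hmem2] with δ hδ
    have hδsmall : δ < min ε₁ 1 := lt_of_lt_of_le hδ.2 (min_le_left _ _)
    have hδη : δ < η := lt_of_lt_of_le hδ.2 (min_le_right _ _)
    obtain ⟨hAfin, hKδ, hsub, hdists⟩ := hfacts δ hδ.1 hδsmall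
    have hint1 := hintφf δ hδ.1 hδsmall
    have hint2 := (hintf δ hδ.1 hδsmall).const_mul (φ r)
    have heq : h δ - φ r * g δ =
        (∫ z in A δ, (φ (dist o z) * f z - φ r * f z) ∂μ) / δ := by
      rw [hh, hg, integral_sub hint1 hint2, integral_const_mul]
      ring
    rw [heq]
    have hnorm : ‖∫ z in A δ, (φ (dist o z) * f z - φ r * f z) ∂μ‖ ≤
        (ε' * C) * (μ (A δ)).toReal := by
      refine norm_setIntegral_le_of_norm_le_const hAfin fun z hz => ?_
      obtain ⟨hd1, hd2⟩ := hdists z hz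
      have hclose : dist (dist o z) r < η := by
        rw [Real.dist_eq, abs_of_nonneg (by linarith)]
        linarith
      have hφb : |φ (dist o z) - φ r| < ε' := by
        have := hηφ hclose
        rwa [Real.dist_eq] at this
      calc ‖φ (dist o z) * f z - φ r * f z‖
          = |φ (dist o z) - φ r| * |f z| := by rw [← sub_mul, norm_mul]; rfl
        _ ≤ ε' * C := mul_le_mul hφb.le (hC z (hsub hz)) (abs_nonneg _) hε'.le
    have hfinal : ‖(∫ z in A δ, (φ (dist o z) * f z - φ r * f z) ∂μ) / δ‖ ≤
        ε' * (C * (K : ℝ)) := by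
      rw [norm_div, Real.norm_of_nonneg hδ.1.le, div_le_iff₀ hδ.1]
      calc ‖∫ z in A δ, (φ (dist o z) * f z - φ r * f z) ∂μ‖
          ≤ (ε' * C) * (μ (A δ)).toReal := hnorm
        _ ≤ (ε' * C) * ((K : ℝ) * δ) := mul_le_mul_of_nonneg_left hKδ (by positivity)
        _ = ε' * (C * (K : ℝ)) * δ := by ring
    have hlt : ε' * (C * (K : ℝ)) < ε := by
      have : ε' * (C * (K : ℝ) + 1) = ε := by
        rw [hε'def]; field_simp
      nlinarith
    exact lt_of_le_of_lt hfinal hlt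
  -- bound data for v = φ r * g
  have hvub : IsBoundedUnder (· ≤ ·) l (fun δ => φ r * g δ) := by
    refine ⟨φ r * (C * (K : ℝ)), eventually_map.mpr ?_⟩
    filter_upwards [hg_ubE] with δ hδ
    exact mul_le_mul_of_nonneg_left hδ hφr0
  have hvlb : IsBoundedUnder (· ≥ ·) l (fun δ => φ r * g δ) := by
    refine ⟨0, eventually_map.mpr ?_⟩
    filter_upwards [hg_lbE] with δ hδ
    exact mul_nonneg hφr0 hδ
  have step1 : limsup h l = limsup (fun δ => φ r * g δ) l :=
    limsup_eq_of_tendsto_sub_aux hto hvub hvlb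
  have step2 : limsup (fun δ => φ r * g δ) l = φ r * limsup g l :=
    limsup_mul_const_aux hφr0 hgub hglb.isCoboundedUnder_le
  show limsup h l = φ r * limsup g l
  rw [step1, step2]
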